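/- There exists a unique 2×2 matrix R(λ) with entries in 𝒜[[λ]] such that: (i) Λ(R(λ))·U(λ) − U(λ)·R(λ) = 0 (an identity of matrices with entries in 𝒜[[λ]][λ]); (ii) R(λ) − ((0, r_{n−1}), (0, 1)) ∈ λ·Mat(2, 𝒜[[λ]]); (iii) tr R(λ) = 1; (iv) det R(λ) = 0. (This R(λ) is denoted R_-(λ) and called the basic matrix resolvent at λ = 0.) -/

import Mathlib

noncomputable section

open PowerSeries

open scoped Classical

/-- The polynomial ring `𝒜 = ℚ[q_{n+i}, r_{n+i} : i ∈ ℤ]`; the variable `(true, i)`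
is `q_{n+i}` and `(false, i)` is `r_{n+i}`. -/
abbrev A : Type := MvPolynomial (Bool × ℤ) ℚ

/-- The generator `q_{n+i}`. -/
def qv (i : ℤ) : A := MvPolynomial.X (true, i)

/-- The generator `r_{n+i}`. -/
def rv (i : ℤ) : A := MvPolynomial.X (false, i)

/-- The shift operator `Λ`, determined by `Λ(q_{n+i}) = q_{n+i+1}`, `Λ(r_{n+i}) = r_{n+i+1}`. -/
def Lam : A →+* A :=
  (MvPolynomial.rename (fun bi : Bool × ℤ => (bi.1, bi.2 + 1))).toRingHom

/-- Formal power series over `𝒜` (in `λ`, or in `λ⁻¹`, depending on the context). -/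
abbrev S : Type := PowerSeries A

/-- 2×2 matrices over `𝒜[[λ]]` (resp. `𝒜[[λ⁻¹]]`). -/
abbrev M2 : Type := Matrix (Fin 2) (Fin 2) S

/-- `Λ` acting coefficientwise on formal power series. -/
def LamS : S →+* S := PowerSeries.map Lam

/-- The Lax matrix `U(λ) = ((λ, r_n), (λ q_n, 1))`, as a matrix over `𝒜[[λ]]`. -/
def Umat : M2 :=
  !![PowerSeries.X, PowerSeries.C (R := A) (rv 0);
     PowerSeries.X * PowerSeries.C (R := A) (qv 0), 1]

/-- The Lax matrix multiplied by `λ⁻¹`, i.e. `λ⁻¹·U(λ) = ((1, λ⁻¹ r_n), (q_n, λ⁻¹))`,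
as a matrix over `𝒜[[λ⁻¹]]` (here `PowerSeries.X` stands for `λ⁻¹`). -/
def UmatInf : M2 :=
  !![1, PowerSeries.X * PowerSeries.C (R := A) (rv 0);
     PowerSeries.C (R := A) (qv 0), PowerSeries.X]

/-- `R` is the basic matrix resolvent at `λ = 0`: it is a matrix resolvent
(`Λ(R(λ))·U(λ) = U(λ)·R(λ)`), `R ≡ ((0, r_{n-1}), (0, 1)) mod λ`, `tr R = 1`, `det R = 0`. -/
def IsResMinus (R : M2) : Prop :=
  R.map (⇑LamS) * Umat = Umat * R ∧
  R.map (⇑(PowerSeries.constantCoeff (R := A))) = !![0, rv (-1); 0, 1] ∧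
  R 0 0 + R 1 1 = 1 ∧
  R 0 0 * R 1 1 - R 0 1 * R 1 0 = 0

/-- `R` is the basic matrix resolvent at `λ = ∞`: it is a matrix resolvent
(the equation `Λ(R(λ))·U(λ) = U(λ)·R(λ)` is multiplied by `λ⁻¹`, so that it takes place
in matrices over `𝒜[[λ⁻¹]]`), `R ≡ ((1, 0), (q_{n-1}, 0)) mod λ⁻¹`, `tr R = 1`, `det R = 0`. -/
def IsResPlus (R : M2) : Prop :=
  R.map (⇑LamS) * UmatInf = UmatInf * R ∧
  R.map (⇑(PowerSeries.constantCoeff (R := A))) = !![1, 0; qv (-1), 0] ∧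
  R 0 0 + R 1 1 = 1 ∧
  R 0 0 * R 1 1 - R 0 1 * R 1 0 = 0

/-- The `p`-th coefficient matrix of a matrix of power series. -/
def coefM (R : M2) (p : ℕ) : Matrix (Fin 2) (Fin 2) A :=
  Matrix.of fun i j => PowerSeries.coeff (R := A) p (R i j)

/-- The coefficients `a_{α,p}` (with `α = + ↔ true`, `α = - ↔ false`). -/
def aC (Rm Rp : M2) (α : Bool) (p : ℕ) : A :=
  if α then coefM Rp p 0 0 - (if p = 0 then 1 else 0) else coefM Rm p 0 0

/-- The coefficients `b_{α,p}`. -/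
def bC (Rm Rp : M2) (α : Bool) (p : ℕ) : A :=
  if α then coefM Rp p 0 1 else coefM Rm p 0 1

/-- The coefficients `c_{α,p}`. -/
def cC (Rm Rp : M2) (α : Bool) (p : ℕ) : A :=
  if α then coefM Rp p 1 0 else coefM Rm p 1 0

/-- `U(λ) = U0 + λ·U1`: constant part. -/
def U0 : Matrix (Fin 2) (Fin 2) A := !![0, rv 0; 0, 1]

/-- `U(λ) = U0 + λ·U1`: linear part. -/
def U1 : Matrix (Fin 2) (Fin 2) A := !![1, 0; qv 0, 0]

/-- The coefficient at `λ^m` (`m ∈ ℤ`) of the Laurent-polynomial matrix `V_{α,p}(λ)`,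
where `V_{-,p}(λ) = (λ^{-p}R_-(λ))_{≤0} - ((a_{-,p}, b_{-,p}), (0,0))` and
`V_{+,p}(λ) = (λ^{p}R_+(λ))_{≥0} - ((0,0), (c_{+,p}, -a_{+,p}))`. -/
def Vc (Rm Rp : M2) (α : Bool) (p : ℕ) (m : ℤ) : Matrix (Fin 2) (Fin 2) A :=
  if α then
    (if 0 ≤ m ∧ m ≤ (p : ℤ) then coefM Rp ((p : ℤ) - m).toNat else 0)
      - (if m = 0 then !![0, 0; cC Rm Rp true p, - aC Rm Rp true p] else 0)
  else
    (if -(p : ℤ) ≤ m ∧ m ≤ 0 then coefM Rm (m + (p : ℤ)).toNat else 0)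
      - (if m = 0 then !![aC Rm Rp false p, bC Rm Rp false p; 0, 0] else 0)

/-- The coefficient at `λ^m` (`m ∈ ℤ`) of `D(U(λ))`, where `D(λ) = 0`, i.e. of
`((0, D r_n), (λ·D q_n, 0))`. -/
def DUcoef (D : Derivation ℚ A A) (m : ℤ) : Matrix (Fin 2) (Fin 2) A :=
  if m = 0 then !![0, D (rv 0); 0, 0]
  else if m = 1 then !![0, 0; D (qv 0), 0] else 0

/-- The equation `D(U(λ)) = Λ(V_{α,p}(λ))·U(λ) - U(λ)·V_{α,p}(λ)`, written coefficientwise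
in powers of `λ` (both sides are Laurent polynomials in `λ` with matrix coefficients). -/
def DUeq (Rm Rp : M2) (α : Bool) (p : ℕ) (D : Derivation ℚ A A) : Prop :=
  ∀ m : ℤ,
    DUcoef D m =
      (Vc Rm Rp α p m).map Lam * U0 + (Vc Rm Rp α p (m - 1)).map Lam * U1
        - U0 * Vc Rm Rp α p m - U1 * Vc Rm Rp α p (m - 1)

/-- `D` commutes with the shift `Λ`. -/
def CommutesLam (D : Derivation ℚ A A) : Prop := ∀ f : A, D (Lam f) = Lam (D f)

/-- The action of `D_{α,p}` on the generators `r_n`, `q_n`. -/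
def GenEqs (Rm Rp : M2) (α : Bool) (p : ℕ) (D : Derivation ℚ A A) : Prop :=
  if α then
    D (rv 0) = rv 0 * Lam (aC Rm Rp true p) + Lam (bC Rm Rp true p)
        + (if p = 0 then rv 0 else 0) ∧
    D (qv 0) = qv 0 * Lam (aC Rm Rp true p) - Lam (cC Rm Rp true p)
  else
    D (rv 0) = -(rv 0 * Lam (aC Rm Rp false p)) - Lam (bC Rm Rp false p) ∧
    D (qv 0) = -(qv 0 * Lam (aC Rm Rp false p)) + Lam (cC Rm Rp false p)
        + (if p = 0 then qv 0 else 0)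

/-- `D` is the Ablowitz–Ladik derivation `D_{α,p}`: the unique derivation of `𝒜`
commuting with `Λ` and acting on the generators by the prescribed formulas. -/
def IsALDeriv (Rm Rp : M2) (α : Bool) (p : ℕ) (D : Derivation ℚ A A) : Prop :=
  CommutesLam D ∧ GenEqs Rm Rp α p D

/-- The coefficient at `λ^m` (`m ∈ ℤ`) of `R_α(λ)`: `R_-(λ)` has only nonnegative powers,
`R_+(λ)` only nonpositive ones. -/
def RExt (Rm Rp : M2) (α : Bool) (m : ℤ) : Matrix (Fin 2) (Fin 2) A :=
  if α then (if m ≤ 0 then coefM Rp (-m).toNat else 0)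
  else (if 0 ≤ m then coefM Rm m.toNat else 0)

/-- Extension of a double sequence by zero to integer indices. -/
def OmExt (Om : ℕ → ℕ → A) (m k : ℤ) : A :=
  if 0 ≤ m ∧ 0 ≤ k then Om m.toNat k.toNat else 0

/-- The generating identity `tr(R_+(λ)R_+(μ)) - 1 = (λ-μ)² Σ_{p,q≥0} Ω_{p,q} λ^{-p-1} μ^{-q-1}`,
written coefficientwise: `m, k` are the exponents of `λ⁻¹, μ⁻¹`. -/
def GenPP (Rp : M2) (Om : ℕ → ℕ → A) : Prop :=
  ∀ m k : ℤ,
    (if 0 ≤ m ∧ 0 ≤ k then (coefM Rp m.toNat * coefM Rp k.toNat).trace else 0)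
      - (if m = 0 ∧ k = 0 then 1 else 0)
    = OmExt Om (m + 1) (k - 1) - 2 * OmExt Om m k + OmExt Om (m - 1) (k + 1)

/-- The generating identity `tr(R_-(λ)R_-(μ)) - 1 = (λ-μ)² Σ_{p,q≥0} Ω_{p,q} λ^{p-1} μ^{q-1}`,
written coefficientwise: `m, k` are the exponents of `λ, μ`. -/
def GenMM (Rm : M2) (Om : ℕ → ℕ → A) : Prop :=
  ∀ m k : ℤ,
    (if 0 ≤ m ∧ 0 ≤ k then (coefM Rm m.toNat * coefM Rm k.toNat).trace else 0)
      - (if m = 0 ∧ k = 0 then 1 else 0)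
    = OmExt Om (m - 1) (k + 1) - 2 * OmExt Om m k + OmExt Om (m + 1) (k - 1)

/-- The generating identity
`Σ_{p,q≥0} Ω_{p,q} λ^{-p-1} μ^{q-1} = -tr(R_+(λ)R_-(μ))·Σ_{m≥1} m μ^{m-1} λ^{-m-1} + λ^{-2}`
(the expansion of `-tr(R_+(λ)R_-(μ))/(λ-μ)² + 1/λ²` for `|λ| > |μ|`), together with the
vanishing `Ω_{0,q} = Ω_{p,0} = 0`; `a` is the exponent of `λ⁻¹` and `b` the one of `μ`. -/
def GenPM (Rm Rp : M2) (Om : ℕ → ℕ → A) : Prop :=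
  (∀ q, Om 0 q = 0) ∧ (∀ p, Om p 0 = 0) ∧
  ∀ a b : ℤ,
    OmExt Om (a - 1) (b + 1)
      = -(∑ m ∈ Finset.Icc (1 : ℤ) (min (a - 1) (b + 1)),
            m • (coefM Rp (a - m - 1).toNat * coefM Rm (b - m + 1).toNat).trace)
        + (if a = 2 ∧ b = 0 then 1 else 0)

/-- The generating identity
`Σ_{p,q≥0} Ω_{q,p} λ^{p-1} μ^{-q-1} = -tr(R_-(λ)R_+(μ))·Σ_{m≥1} m λ^{m-1} μ^{-m-1} + μ^{-2}`
(the expansion of `-tr(R_-(λ)R_+(μ))/(λ-μ)² + 1/μ²` for `|μ| > |λ|`);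
`c` is the exponent of `λ` and `d` the one of `μ⁻¹`. -/
def GenMP (Rm Rp : M2) (Om : ℕ → ℕ → A) : Prop :=
  ∀ c d : ℤ,
    OmExt Om (d - 1) (c + 1)
      = -(∑ m ∈ Finset.Icc (1 : ℤ) (min (c + 1) (d - 1)),
            m • (coefM Rm (c - m + 1).toNat * coefM Rp (d - m - 1).toNat).trace)
        + (if c = 0 ∧ d = 2 then 1 else 0)

/-- `Om α β p q` is the full tau-structure family `Ω_{α,p;β,q}`
(with `α = + ↔ true`), as defined by the four generating identities,
where `Ω_{-,p;+,q} := Ω_{+,q;-,p}`. -/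
def OmFam (Rm Rp : M2) (Om : Bool → Bool → ℕ → ℕ → A) : Prop :=
  GenPP Rp (Om true true) ∧ GenMM Rm (Om false false) ∧ GenPM Rm Rp (Om true false) ∧
  ∀ p q, Om false true p q = Om true false q p

/-- The multipoint quantities `Ω_{α_1,p_1;…;α_m,p_m}` (`m = k + 2` points), defined
inductively from the two-point family by applying the derivations `D_{α,p}`. -/
def OmK (Om : Bool → Bool → ℕ → ℕ → A) (D : Bool → ℕ → Derivation ℚ A A) :
    (k : ℕ) → (Fin (k + 2) → Bool) → (Fin (k + 2) → ℕ) → A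
  | 0, β, i => Om (β 0) (β 1) (i 0) (i 1)
  | k + 1, β, i =>
      D (β (Fin.last (k + 2))) (i (Fin.last (k + 2)))
        (OmK Om D k (fun j => β j.castSucc) (fun j => i j.castSucc))

/-- Multiplication of a formal series in `λ_1, …, λ_n` with exponents in `ℤⁿ`
(given by its coefficient function `F`) by a polynomial `P`, coefficientwise. -/
def mulPoly {n : ℕ} (P : MvPolynomial (Fin n) A) (F : (Fin n → ℤ) → A)
    (m : Fin n → ℤ) : A :=
  ∑ d ∈ P.support, P.coeff d * F (fun j => m j - d j)

/-- The Vandermonde-type polynomial `∏_{i<j} (λ_i - λ_j)`. -/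
def vandP (n : ℕ) : MvPolynomial (Fin n) A :=
  ∏ p ∈ Finset.univ.filter (fun p : Fin n × Fin n => p.1 < p.2),
    (MvPolynomial.X p.1 - MvPolynomial.X p.2)

/-- `i` and `j` are cyclically adjacent for `σ`, i.e. `{i,j} = {σ(t), σ(t+1)}` for some `t`. -/
def cycAdj {n : ℕ} [NeZero n] (σ : Equiv.Perm (Fin n)) (i j : Fin n) : Prop :=
  ∃ t : Fin n, (σ t = i ∧ σ (t + 1) = j) ∨ (σ t = j ∧ σ (t + 1) = i)

/-- The polynomial `∏_{i<j} (λ_i - λ_j) / ∏_t (λ_{σ(t)} - λ_{σ(t+1)})`, up to the sign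
`permSign σ`: the product of `(λ_i - λ_j)` over ordered non-cyclically-adjacent pairs. -/
def Qpoly {n : ℕ} [NeZero n] (σ : Equiv.Perm (Fin n)) : MvPolynomial (Fin n) A :=
  ∏ p ∈ Finset.univ.filter
      (fun p : Fin n × Fin n => p.1 < p.2 ∧ ¬ cycAdj σ p.1 p.2),
    (MvPolynomial.X p.1 - MvPolynomial.X p.2)

/-- The sign relating `∏_t (λ_{σ(t)} - λ_{σ(t+1)})` with the corresponding product over
ordered pairs. -/
def permSign {n : ℕ} [NeZero n] (σ : Equiv.Perm (Fin n)) : A :=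
  ∏ t : Fin n, (if σ (t + 1) < σ t then (-1 : A) else 1)

/-- The coefficient function of `tr(R_{α_{σ(1)}}(λ_{σ(1)}) ⋯ R_{α_{σ(n)}}(λ_{σ(n)}))`. -/
def Gfun (Rm Rp : M2) {n : ℕ} (β : Fin n → Bool) (σ : Equiv.Perm (Fin n))
    (m : Fin n → ℤ) : A :=
  (List.ofFn (fun j : Fin n => RExt Rm Rp (β (σ j)) (m (σ j)))).prod.trace

/-- The coefficient function of the generating series
`Σ_{i_1,…,i_m ≥ 0} Ω_{α_1,i_1;…;α_m,i_m} / (λ_1^{α_1 i_1 + 1} ⋯ λ_m^{α_m i_m + 1})`. -/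
def lhsF (Om : Bool → Bool → ℕ → ℕ → A) (D : Bool → ℕ → Derivation ℚ A A)
    {k : ℕ} (β : Fin (k + 2) → Bool) (m : Fin (k + 2) → ℤ) : A :=
  if (∀ j, if β j then m j ≤ -1 else -1 ≤ m j) then
    OmK Om D k β (fun j => if β j then (-(m j) - 1).toNat else (m j + 1).toNat)
  else 0
section AuxResolvent

def LamInv : A →+* A :=
  (MvPolynomial.rename (fun bi : Bool × ℤ => (bi.1, bi.2 - 1))).toRingHom

lemma comp_id1 : ((fun bi : Bool × ℤ => (bi.1, bi.2 + 1)) ∘ fun bi : Bool × ℤ => (bi.1, bi.2 - 1)) = id := by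
  funext bi; simp

lemma comp_id2 : ((fun bi : Bool × ℤ => (bi.1, bi.2 - 1)) ∘ fun bi : Bool × ℤ => (bi.1, bi.2 + 1)) = id := by
  funext bi; simp

lemma Lam_LamInv (x : A) : Lam (LamInv x) = x := by
  simp only [Lam, LamInv, AlgHom.toRingHom_eq_coe, RingHom.coe_coe,
    MvPolynomial.rename_rename, comp_id1, MvPolynomial.rename_id, AlgHom.id_apply]

lemma LamInv_Lam (x : A) : LamInv (Lam x) = x := by
  simp only [Lam, LamInv, AlgHom.toRingHom_eq_coe, RingHom.coe_coe,
    MvPolynomial.rename_rename, comp_id2, MvPolynomial.rename_id, AlgHom.id_apply]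

lemma Lam_injective : Function.Injective Lam :=
  Function.LeftInverse.injective LamInv_Lam

lemma Lam_rv (i : ℤ) : Lam (rv i) = rv (i + 1) := by
  simp [Lam, rv, MvPolynomial.rename_X]

lemma Lam_qv (i : ℤ) : Lam (qv i) = qv (i + 1) := by
  simp [Lam, qv, MvPolynomial.rename_X]

/-- The coefficients of the series `f` with `(1 + λ q_n f)·Λf = λ f + r_n`. -/
def fseq : ℕ → A
  | 0 => rv (-1)
  | (p + 1) => LamInv (fseq p -
      qv 0 * ∑ i ∈ (Finset.range (p + 1)).attach, fseq i.1 * Lam (fseq (p - i.1)))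
  decreasing_by
  all_goals (first | (have h := Finset.mem_range.mp i.2; omega) | omega)

/-- The coefficients of the series `G` with `λ q_n + G = (λ + r_n G)·ΛG`. -/
def gseq : ℕ → A
  | 0 => 0
  | (p + 1) => Lam (gseq p) +
      rv 0 * (∑ i ∈ (Finset.range p).attach, gseq (i.1 + 1) * Lam (gseq (p - i.1)))
      - (if p = 0 then qv 0 else 0)
  decreasing_by
  all_goals (first | (have h := Finset.mem_range.mp i.2; omega) | omega)

end AuxResolvent
section AuxSeries

def FF : S := PowerSeries.mk fseq

def GG : S := PowerSeries.mk gseq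

lemma fseq_zero : fseq 0 = rv (-1) := by rw [fseq]

lemma gseq_zero : gseq 0 = 0 := by rw [gseq]

lemma gseq_one : gseq 1 = -qv 0 := by
  rw [gseq]; simp [gseq_zero]

lemma Lam_fseq_succ (p : ℕ) :
    Lam (fseq (p + 1)) =
      fseq p - qv 0 * ∑ i ∈ Finset.range (p + 1), fseq i * Lam (fseq (p - i)) := by
  rw [fseq, Lam_LamInv,
    Finset.sum_attach (Finset.range (p + 1)) (fun i => fseq i * Lam (fseq (p - i)))]

lemma gseq_succ_succ (n : ℕ) :
    gseq (n + 2) = Lam (gseq (n + 1)) +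
      rv 0 * ∑ i ∈ Finset.range (n + 1), gseq (i + 1) * Lam (gseq (n + 1 - i)) := by
  rw [gseq,
    Finset.sum_attach (Finset.range (n + 1)) (fun i => gseq (i + 1) * Lam (gseq (n + 1 - i)))]
  simp only [Nat.add_one_ne_zero, if_false, sub_zero]

lemma E1 : (1 + PowerSeries.X * PowerSeries.C (R := A) (qv 0) * FF) * LamS FF
    = PowerSeries.X * FF + PowerSeries.C (R := A) (rv 0) := by
  have h : (1 + PowerSeries.X * PowerSeries.C (R := A) (qv 0) * FF) * LamS FF
      = LamS FF + PowerSeries.X * (PowerSeries.C (R := A) (qv 0) * (FF * LamS FF)) := by ring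
  rw [h]
  refine PowerSeries.ext fun n => ?_
  cases n with
  | zero =>
      rw [map_add, map_add, PowerSeries.coeff_zero_X_mul, PowerSeries.coeff_zero_X_mul,
        PowerSeries.coeff_zero_C, add_zero, zero_add]
      simp only [LamS, PowerSeries.coeff_map, FF, PowerSeries.coeff_mk]
      rw [fseq_zero, Lam_rv]; norm_num
  | succ n =>
      rw [map_add, map_add, PowerSeries.coeff_succ_X_mul, PowerSeries.coeff_succ_X_mul,
        PowerSeries.coeff_C_mul, PowerSeries.coeff_mul]
      simp only [LamS, PowerSeries.coeff_map, FF, PowerSeries.coeff_mk,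
        PowerSeries.coeff_C, Nat.succ_ne_zero, if_false, add_zero]
      rw [Finset.Nat.sum_antidiagonal_eq_sum_range_succ_mk, Lam_fseq_succ]
      ring

lemma E2 : PowerSeries.X * PowerSeries.C (R := A) (qv 0) + GG
    = (PowerSeries.X + PowerSeries.C (R := A) (rv 0) * GG) * LamS GG := by
  have h : (PowerSeries.X + PowerSeries.C (R := A) (rv 0) * GG) * LamS GG
      = PowerSeries.X * LamS GG + PowerSeries.C (R := A) (rv 0) * (GG * LamS GG) := by ring
  rw [h, show PowerSeries.X * PowerSeries.C (R := A) (qv 0)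
      = PowerSeries.C (R := A) (qv 0) * PowerSeries.X from mul_comm _ _]
  refine PowerSeries.ext fun n => ?_
  match n with
  | 0 =>
      rw [map_add, map_add, PowerSeries.coeff_zero_mul_X, PowerSeries.coeff_zero_X_mul,
        PowerSeries.coeff_C_mul, zero_add, zero_add]
      simp [GG, gseq_zero]
  | 1 =>
      rw [map_add, map_add, PowerSeries.coeff_succ_mul_X, PowerSeries.coeff_succ_X_mul,
        PowerSeries.coeff_C_mul, PowerSeries.coeff_mul]
      simp only [PowerSeries.coeff_zero_eq_constantCoeff, PowerSeries.constantCoeff_C,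
        LamS, PowerSeries.coeff_map, GG, PowerSeries.coeff_mk]
      rw [Finset.Nat.sum_antidiagonal_eq_sum_range_succ_mk]
      simp [Finset.sum_range_succ, gseq_zero, gseq_one]
  | (n + 2) =>
      rw [map_add, map_add, PowerSeries.coeff_succ_X_mul]
      have hx : (PowerSeries.coeff (R := A) (n + 2)) (PowerSeries.C (R := A) (qv 0) * PowerSeries.X) = 0 := by
        rw [PowerSeries.coeff_C_mul, PowerSeries.coeff_X]; simp
      rw [hx, PowerSeries.coeff_C_mul, PowerSeries.coeff_mul, zero_add]
      simp only [LamS, PowerSeries.coeff_map, GG, PowerSeries.coeff_mk]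
      have hsum : ∑ p ∈ Finset.HasAntidiagonal.antidiagonal (n + 2), gseq p.1 * Lam (gseq p.2)
          = ∑ i ∈ Finset.range (n + 1), gseq (i + 1) * Lam (gseq (n + 1 - i)) := by
        rw [Finset.Nat.sum_antidiagonal_eq_sum_range_succ_mk,
          Finset.sum_range_succ, Finset.sum_range_succ']
        simp only [gseq_zero, Nat.sub_self, map_zero, mul_zero, zero_mul, add_zero, zero_add]
        exact Finset.sum_congr rfl fun i _ => by rw [show n + 2 - (i + 1) = n + 1 - i by omega]
      rw [hsum, gseq_succ_succ]

end AuxSeries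
section AuxExist

def sS : S := PowerSeries.invOfUnit (1 - FF * GG) 1

lemma constCoeff_FF : PowerSeries.constantCoeff (R := A) FF = rv (-1) := by
  simp [FF, fseq_zero]

lemma constCoeff_GG : PowerSeries.constantCoeff (R := A) GG = 0 := by
  simp [GG, gseq_zero]

lemma L0 : (1 - FF * GG) * sS = 1 := by
  refine PowerSeries.mul_invOfUnit _ 1 ?_
  simp [constCoeff_GG]

lemma L0' : (1 - LamS FF * LamS GG) * LamS sS = 1 := by
  have h := congrArg LamS L0
  simpa only [map_mul, map_sub, map_one] using h

lemma Ppoly : (1 - PowerSeries.C (R := A) (rv 0) * LamS GG) * (1 - FF * GG)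
    = (1 + PowerSeries.X * PowerSeries.C (R := A) (qv 0) * FF) * (1 - LamS FF * LamS GG) := by
  linear_combination (LamS GG) * E1 - FF * E2

lemma H1 : LamS sS * (1 - PowerSeries.C (R := A) (rv 0) * LamS GG)
    = (1 + PowerSeries.X * PowerSeries.C (R := A) (qv 0) * FF) * sS := by
  linear_combination (-(LamS sS * (1 - PowerSeries.C (R := A) (rv 0) * LamS GG))) * L0
    + (sS * LamS sS) * Ppoly
    + ((1 + PowerSeries.X * PowerSeries.C (R := A) (qv 0) * FF) * sS) * L0'

lemma H2 : PowerSeries.X * LamS GG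
    = PowerSeries.X * PowerSeries.C (R := A) (qv 0) + GG * (1 - PowerSeries.C (R := A) (rv 0) * LamS GG) := by
  linear_combination -E2

lemma constCoeff_sS : PowerSeries.constantCoeff (R := A) sS = 1 := by
  have h := congrArg (PowerSeries.constantCoeff (R := A)) L0
  simpa [constCoeff_GG] using h

def Rres : M2 := !![-(FF * GG * sS), FF * sS; -(GG * sS), sS]

lemma Rres_isResMinus : IsResMinus Rres := by
  refine ⟨?_, ?_, ?_, ?_⟩
  · ext i j : 1
    fin_cases i <;> fin_cases j <;>
      simp only [Rres, Umat, Matrix.mul_apply, Fin.sum_univ_two, Matrix.map_apply,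
        Fin.mk_zero, Fin.mk_one, Fin.isValue,
        Matrix.cons_val', Matrix.cons_val_zero, Matrix.cons_val_one, Matrix.head_cons,
        Matrix.head_fin_const, Matrix.empty_val', Matrix.cons_val_fin_one, Matrix.of_apply,
        map_neg, map_mul, map_one]
    · linear_combination (-(LamS FF * LamS sS)) * H2 + (-(LamS FF * GG)) * H1
        + (-(GG * sS)) * E1
    · linear_combination (LamS FF) * H1 + sS * E1
    · linear_combination (-(LamS sS)) * H2 + (-GG) * H1
    · linear_combination H1
  · ext i j : 1
    fin_cases i <;> fin_cases j <;>
      simp [Rres, Matrix.map_apply, constCoeff_FF, constCoeff_GG, constCoeff_sS]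
  · show -(FF * GG * sS) + sS = 1
    linear_combination L0
  · show -(FF * GG * sS) * sS - FF * sS * -(GG * sS) = 0
    ring

end AuxExist
section AuxUniq

lemma coeff_shift {φ χ ψ ω : S}
    (hEq : φ * PowerSeries.X + χ = ψ * PowerSeries.X + ω) (p : ℕ) :
    PowerSeries.coeff (R := A) p φ + PowerSeries.coeff (R := A) (p + 1) χ
      = PowerSeries.coeff (R := A) p ψ + PowerSeries.coeff (R := A) (p + 1) ω := by
  have h2 := congrArg (PowerSeries.coeff (R := A) (p + 1)) hEq
  simpa only [map_add, PowerSeries.coeff_succ_mul_X] using h2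

variable {R : M2}

lemma res00 (h : IsResMinus R) :
    LamS (R 0 0) * PowerSeries.X + LamS (R 0 1) * (PowerSeries.X * PowerSeries.C (R := A) (qv 0))
      = PowerSeries.X * R 0 0 + PowerSeries.C (R := A) (rv 0) * R 1 0 := by
  have e := Matrix.ext_iff.mpr h.1 0 0
  simpa [Umat, Matrix.mul_apply, Fin.sum_univ_two, Matrix.map_apply] using e

lemma res01 (h : IsResMinus R) :
    LamS (R 0 0) * PowerSeries.C (R := A) (rv 0) + LamS (R 0 1)
      = PowerSeries.X * R 0 1 + PowerSeries.C (R := A) (rv 0) * R 1 1 := by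
  have e := Matrix.ext_iff.mpr h.1 0 1
  simpa [Umat, Matrix.mul_apply, Fin.sum_univ_two, Matrix.map_apply] using e

lemma res10 (h : IsResMinus R) :
    LamS (R 1 0) * PowerSeries.X + LamS (R 1 1) * (PowerSeries.X * PowerSeries.C (R := A) (qv 0))
      = PowerSeries.X * PowerSeries.C (R := A) (qv 0) * R 0 0 + R 1 0 := by
  have e := Matrix.ext_iff.mpr h.1 1 0
  simpa [Umat, Matrix.mul_apply, Fin.sum_univ_two, Matrix.map_apply] using e

lemma coeff0_00 (h : IsResMinus R) : PowerSeries.coeff (R := A) 0 (R 0 0) = 0 := by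
  have e := Matrix.ext_iff.mpr h.2.1 0 0
  simpa [Matrix.map_apply, PowerSeries.coeff_zero_eq_constantCoeff] using e

lemma coeff0_01 (h : IsResMinus R) : PowerSeries.coeff (R := A) 0 (R 0 1) = rv (-1) := by
  have e := Matrix.ext_iff.mpr h.2.1 0 1
  simpa [Matrix.map_apply, PowerSeries.coeff_zero_eq_constantCoeff] using e

lemma coeff0_10 (h : IsResMinus R) : PowerSeries.coeff (R := A) 0 (R 1 0) = 0 := by
  have e := Matrix.ext_iff.mpr h.2.1 1 0
  simpa [Matrix.map_apply, PowerSeries.coeff_zero_eq_constantCoeff] using e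

lemma coeff0_11 (h : IsResMinus R) : PowerSeries.coeff (R := A) 0 (R 1 1) = 1 := by
  have e := Matrix.ext_iff.mpr h.2.1 1 1
  simpa [Matrix.map_apply, PowerSeries.coeff_zero_eq_constantCoeff] using e

lemma EqC (h : IsResMinus R) (p : ℕ) :
    PowerSeries.coeff (R := A) (p + 1) (R 1 0)
      = Lam (PowerSeries.coeff (R := A) p (R 1 0)) + Lam (PowerSeries.coeff (R := A) p (R 1 1)) * qv 0
        - qv 0 * PowerSeries.coeff (R := A) p (R 0 0) := by
  have e2 : (LamS (R 1 0) + LamS (R 1 1) * PowerSeries.C (R := A) (qv 0)) * PowerSeries.X + 0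
      = (PowerSeries.C (R := A) (qv 0) * R 0 0) * PowerSeries.X + R 1 0 := by
    linear_combination res10 h
  have e3 := coeff_shift e2 p
  simp only [map_add, map_zero, add_zero, PowerSeries.coeff_mul_C, PowerSeries.coeff_C_mul,
    LamS, PowerSeries.coeff_map] at e3
  linear_combination -e3

lemma EqB (h : IsResMinus R) (p : ℕ) :
    Lam (PowerSeries.coeff (R := A) (p + 1) (R 0 1))
      = PowerSeries.coeff (R := A) p (R 0 1) + rv 0 * PowerSeries.coeff (R := A) (p + 1) (R 1 1)
        - Lam (PowerSeries.coeff (R := A) (p + 1) (R 0 0)) * rv 0 := by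
  have e2 : (0 : S) * PowerSeries.X + (LamS (R 0 0) * PowerSeries.C (R := A) (rv 0) + LamS (R 0 1))
      = (R 0 1) * PowerSeries.X + PowerSeries.C (R := A) (rv 0) * R 1 1 := by
    linear_combination res01 h
  have e3 := coeff_shift e2 p
  simp only [map_add, map_zero, zero_add, PowerSeries.coeff_mul_C, PowerSeries.coeff_C_mul,
    LamS, PowerSeries.coeff_map] at e3
  linear_combination e3

lemma EqA (h : IsResMinus R) (p : ℕ) :
    PowerSeries.coeff (R := A) p (R 0 0)
      = (∑ x ∈ Finset.HasAntidiagonal.antidiagonal p,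
          PowerSeries.coeff (R := A) x.1 (R 0 0) * PowerSeries.coeff (R := A) x.2 (R 0 0))
        + ∑ x ∈ Finset.HasAntidiagonal.antidiagonal p,
            PowerSeries.coeff (R := A) x.1 (R 0 1) * PowerSeries.coeff (R := A) x.2 (R 1 0) := by
  have hdet : R 0 0 = R 0 0 * R 0 0 + R 0 1 * R 1 0 := by
    linear_combination h.2.2.2 - R 0 0 * h.2.2.1
  have e := congrArg (PowerSeries.coeff (R := A) p) hdet
  rw [map_add, PowerSeries.coeff_mul, PowerSeries.coeff_mul] at e
  exact e

lemma EqD (h : IsResMinus R) (p : ℕ) :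
    PowerSeries.coeff (R := A) p (R 1 1)
      = (if p = 0 then 1 else 0) - PowerSeries.coeff (R := A) p (R 0 0) := by
  have e := congrArg (PowerSeries.coeff (R := A) p) h.2.2.1
  rw [map_add, PowerSeries.coeff_one] at e
  linear_combination e

lemma resolvent_unique {R1 R2 : M2} (h1 : IsResMinus R1) (h2 : IsResMinus R2) : R1 = R2 := by
  suffices H : ∀ p : ℕ, ∀ i j, PowerSeries.coeff (R := A) p (R1 i j) = PowerSeries.coeff (R := A) p (R2 i j) by
    ext i j : 1
    exact PowerSeries.ext fun p => H p i j
  intro p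
  induction p using Nat.strong_induction_on with
  | _ p IH =>
    match p with
    | 0 =>
        intro i j
        fin_cases i <;> fin_cases j
        · exact (coeff0_00 h1).trans (coeff0_00 h2).symm
        · exact (coeff0_01 h1).trans (coeff0_01 h2).symm
        · exact (coeff0_10 h1).trans (coeff0_10 h2).symm
        · exact (coeff0_11 h1).trans (coeff0_11 h2).symm
    | (p + 1) =>
        have hc : PowerSeries.coeff (R := A) (p + 1) (R1 1 0) = PowerSeries.coeff (R := A) (p + 1) (R2 1 0) := by
          rw [EqC h1, EqC h2, IH p (by omega) 1 0, IH p (by omega) 1 1, IH p (by omega) 0 0]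
        have ha : PowerSeries.coeff (R := A) (p + 1) (R1 0 0) = PowerSeries.coeff (R := A) (p + 1) (R2 0 0) := by
          rw [EqA h1, EqA h2]
          refine congrArg₂ (· + ·) (Finset.sum_congr rfl fun x hx => ?_)
            (Finset.sum_congr rfl fun x hx => ?_) <;>
            rw [Finset.HasAntidiagonal.mem_antidiagonal] at hx
          · rcases eq_or_ne x.1 0 with h0 | h0
            · rw [h0, coeff0_00 h1, coeff0_00 h2, zero_mul, zero_mul]
            · rcases eq_or_ne x.2 0 with h0' | h0'
              · rw [h0', coeff0_00 h1, coeff0_00 h2, mul_zero, mul_zero]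
              · rw [IH x.1 (by omega) 0 0, IH x.2 (by omega) 0 0]
          · rcases eq_or_ne x.2 0 with h0' | h0'
            · rw [h0', coeff0_10 h1, coeff0_10 h2, mul_zero, mul_zero]
            · rcases eq_or_ne x.1 0 with h0 | h0
              · have hx2 : x.2 = p + 1 := by omega
                rw [h0, hx2, coeff0_01 h1, coeff0_01 h2, hc]
              · rw [IH x.1 (by omega) 0 1, IH x.2 (by omega) 1 0]
        have hd : PowerSeries.coeff (R := A) (p + 1) (R1 1 1) = PowerSeries.coeff (R := A) (p + 1) (R2 1 1) := by
          rw [EqD h1, EqD h2, ha]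
        have hb : PowerSeries.coeff (R := A) (p + 1) (R1 0 1) = PowerSeries.coeff (R := A) (p + 1) (R2 0 1) := by
          refine Lam_injective ?_
          rw [EqB h1, EqB h2, IH p (by omega) 0 1, hd, ha]
        intro i j
        fin_cases i <;> fin_cases j
        · exact ha
        · exact hb
        · exact hc
        · exact hd

end AuxUniq
/-- Existence and uniqueness of the basic matrix resolvent `R_-(λ)` at `λ = 0`. -/
theorem exists_unique_basic_resolvent_minus : ∃! R : M2, IsResMinus R :=
  ⟨Rres, Rres_isResMinus, fun _ h => resolvent_unique h Rres_isResMinus⟩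
end
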